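/- In a linear structural equation model X = AX + u with A strictly lower triangular, each variable X_i admits the ancestral expansion: for any subset S of the variables excluding X_i, X_i = Σ_{X_j ∈ S} τ_{ij|do(S\{X_j})} X_j + Σ_{X_k ∈ AN(X_i)\S} τ_{ik|do(S)} u_k + u_i, where τ_{ij|do(Z)} denotes the Z-controlled total effect (the sum over directed paths from X_j to X_i avoiding edges into Z of the products of path coefficients). -/
import Mathlib


open MeasureTheory
open scoped Classical

/-- The `Z`-controlled total effect of `X j` on `X i`: the `(i,j)` entry of `(I - A_Z)⁻¹`
where `A_Z` deletes all edges whose head lies in `Z` (sum over directed paths from `j` to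
`i` avoiding edges into `Z` of the products of path coefficients). -/
noncomputable def ctrlEffect {N : ℕ} (A : Matrix (Fin N) (Fin N) ℝ)
    (Z : Set (Fin N)) (i j : Fin N) : ℝ :=
  (1 - Matrix.of fun a b => if a ∈ Z then (0 : ℝ) else A a b)⁻¹ i j

namespace AncExpAux

variable {N : ℕ}

lemma pow_entry_le {D : Matrix (Fin N) (Fin N) ℝ}
    (hD : ∀ i j : Fin N, i ≤ j → D i j = 0) :
    ∀ n (i k : Fin N), (D ^ n) i k ≠ 0 → (k : ℕ) + n ≤ (i : ℕ) := by
  intro n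
  induction n with
  | zero =>
    intro i k h
    rw [pow_zero] at h
    by_cases hik : i = k
    · subst hik; omega
    · simp [Matrix.one_apply, hik] at h
  | succ n ih =>
    intro i k h
    rw [pow_succ', Matrix.mul_apply] at h
    obtain ⟨a, -, ha⟩ := Finset.exists_ne_zero_of_sum_ne_zero h
    have h1 : D i a ≠ 0 := left_ne_zero_of_mul ha
    have h2 : (D ^ n) a k ≠ 0 := right_ne_zero_of_mul ha
    have h3 := ih a k h2
    have h4 : (a : ℕ) < i := by
      rcases lt_or_ge a i with h' | h'
      · exact h'
      · exact absurd (hD i a h') h1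
    omega

lemma pow_card_eq_zero {D : Matrix (Fin N) (Fin N) ℝ}
    (hD : ∀ i j : Fin N, i ≤ j → D i j = 0) : D ^ N = 0 := by
  ext i k
  simp only [Matrix.zero_apply]
  by_contra h
  have h1 := AncExpAux.pow_entry_le hD N i k h
  have h2 := i.isLt
  omega

lemma geom_left {D : Matrix (Fin N) (Fin N) ℝ}
    (hD : ∀ i j : Fin N, i ≤ j → D i j = 0) :
    (∑ n ∈ Finset.range N, D ^ n) * (1 - D) = 1 := by
  have hg := geom_sum_mul D N
  rw [pow_card_eq_zero hD, zero_sub] at hg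
  calc (∑ n ∈ Finset.range N, D ^ n) * (1 - D)
      = -((∑ n ∈ Finset.range N, D ^ n) * (D - 1)) := by rw [← mul_neg, neg_sub]
    _ = 1 := by rw [hg, neg_neg]

lemma inv_geom {D : Matrix (Fin N) (Fin N) ℝ}
    (hD : ∀ i j : Fin N, i ≤ j → D i j = 0) :
    (1 - D)⁻¹ = ∑ n ∈ Finset.range N, D ^ n :=
  Matrix.inv_eq_left_inv (geom_left hD)

lemma pow_col {B C : Matrix (Fin N) (Fin N) ℝ}
    (hB : ∀ i j : Fin N, i ≤ j → B i j = 0)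
    (hC : ∀ i j : Fin N, i ≤ j → C i j = 0)
    (j : Fin N)
    (hrow : ∀ a b : Fin N, a ≠ j → C a b = B a b)
    (hBj : ∀ b : Fin N, B j b = 0) :
    ∀ n (a : Fin N), (C ^ n) a j = (B ^ n) a j := by
  intro n
  induction n with
  | zero => intro a; simp
  | succ n ih =>
    intro a
    rw [pow_succ', pow_succ', Matrix.mul_apply, Matrix.mul_apply]
    by_cases haj : a = j
    · subst haj
      rw [Finset.sum_eq_zero, Finset.sum_eq_zero]
      · intro b _; rw [hBj b, zero_mul]
      · intro b _
        rcases eq_or_ne (C a b) 0 with hc | hc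
        · rw [hc, zero_mul]
        · have hb : (b : ℕ) < a := by
            rcases lt_or_ge b a with h' | h'
            · exact h'
            · exact absurd (hC a b h') hc
          rcases eq_or_ne ((C ^ n) b a) 0 with hp | hp
          · rw [hp, mul_zero]
          · exfalso
            rw [ih b] at hp
            have := AncExpAux.pow_entry_le hB n b a hp
            omega
    · apply Finset.sum_congr rfl
      intro b _
      rw [hrow a b haj, ih b]

lemma pow_anc {A B : Matrix (Fin N) (Fin N) ℝ}
    (hBA : ∀ a b : Fin N, B a b ≠ 0 → A a b ≠ 0) :
    ∀ n (i k : Fin N), (B ^ n) i k ≠ 0 →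
      i = k ∨ Relation.TransGen (fun a b => A b a ≠ 0) k i := by
  intro n
  induction n with
  | zero =>
    intro i k h
    rw [pow_zero] at h
    by_cases hik : i = k
    · exact Or.inl hik
    · simp [Matrix.one_apply, hik] at h
  | succ n ih =>
    intro i k h
    rw [pow_succ', Matrix.mul_apply] at h
    obtain ⟨a, -, ha⟩ := Finset.exists_ne_zero_of_sum_ne_zero h
    have h1 : A i a ≠ 0 := hBA i a (left_ne_zero_of_mul ha)
    have h2 : (B ^ n) a k ≠ 0 := right_ne_zero_of_mul ha
    rcases ih a k h2 with rfl | h3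
    · exact Or.inr (Relation.TransGen.single h1)
    · exact Or.inr (h3.tail h1)

lemma transGen_lt {A : Matrix (Fin N) (Fin N) ℝ}
    (hA : ∀ i j : Fin N, i ≤ j → A i j = 0) :
    ∀ a b : Fin N, Relation.TransGen (fun a b => A b a ≠ 0) a b → a < b := by
  intro a b h
  induction h with
  | single h =>
    rcases lt_or_ge a _ with h' | h'
    · exact h'
    · exact absurd (hA _ a h') h
  | @tail b c h1 h2 ih =>
    have : b < c := by
      rcases lt_or_ge b c with h' | h'
      · exact h'
      · exact absurd (hA c b h') h2
    exact ih.trans this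

end AncExpAux

/-- ancestral expansion: in the linear SEM `X = AX + u` with `A` strictly
lower triangular, for any `S ⊆ V \ {i}`,
`X i = Σ_{j∈S} τ_{ij|do(S\{j})} X j + Σ_{k∈AN(i)\S} τ_{ik|do(S)} u k + u i`. -/
theorem ancestral_expansion
    {Ω : Type*} {N : ℕ} (A : Matrix (Fin N) (Fin N) ℝ)
    (hA : ∀ i j : Fin N, i ≤ j → A i j = 0)
    (u X : Ω → Fin N → ℝ)
    (hSEM : ∀ ω, X ω = A.mulVec (X ω) + u ω)
    (Anc : Fin N → Fin N → Prop)
    (hAnc : Anc = Relation.TransGen fun a b => A b a ≠ 0)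
    (S : Set (Fin N)) (i : Fin N) (hiS : i ∉ S) :
    ∀ ω, X ω i =
      (∑ j, if j ∈ S then ctrlEffect A (S \ {j}) i j * X ω j else 0)
      + (∑ k, if Anc k i ∧ k ∉ S then ctrlEffect A S i k * u ω k else 0)
      + u ω i := by
  intro ω
  set B : Matrix (Fin N) (Fin N) ℝ :=
    Matrix.of fun a b => if a ∈ S then (0 : ℝ) else A a b with hBdef
  have hBlt : ∀ a b : Fin N, a ≤ b → B a b = 0 := by
    intro a b hab
    simp only [hBdef, Matrix.of_apply]
    split
    · rfl
    · exact hA a b hab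
  have hBA : ∀ a b : Fin N, B a b ≠ 0 → A a b ≠ 0 := by
    intro a b h
    simp only [hBdef, Matrix.of_apply] at h
    split at h
    · exact absurd rfl h
    · exact h
  set M : Matrix (Fin N) (Fin N) ℝ := (1 - B)⁻¹ with hMdef
  have hMgeom : M = ∑ n ∈ Finset.range N, B ^ n := AncExpAux.inv_geom hBlt
  have hMB : M * (1 - B) = 1 := by rw [hMgeom]; exact AncExpAux.geom_left hBlt
  set x := X ω with hxdef
  set v := u ω with hvdef
  have hx : x = A.mulVec x + v := hSEM ω
  -- step 2 : x i = ∑ k, M i k * ((1 - B).mulVec x) k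
  have key : x i = ∑ k, M i k * ((1 - B).mulVec x) k := by
    have h1 : ((M * (1 - B)).mulVec x) i = x i := by rw [hMB, Matrix.one_mulVec]
    rw [← h1, ← Matrix.mulVec_mulVec]
    simp [Matrix.mulVec, dotProduct]
  -- step 1
  have hstep1 : ∀ k, ((1 - B).mulVec x) k = (if k ∈ S then x k - v k else 0) + v k := by
    intro k
    have hxk : x k = (∑ b, A k b * x b) + v k := by
      conv_lhs => rw [hx]
      simp [Matrix.mulVec, dotProduct]
    rw [Matrix.sub_mulVec, Matrix.one_mulVec, Pi.sub_apply]
    by_cases hk : k ∈ S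
    · have hBrow : (B.mulVec x) k = 0 := by
        simp [Matrix.mulVec, dotProduct, hBdef, hk]
      rw [hBrow, if_pos hk]; ring
    · have hBrow : (B.mulVec x) k = ∑ b, A k b * x b := by
        simp [Matrix.mulVec, dotProduct, hBdef, hk]
      rw [hBrow, if_neg hk, hxk]; ring
  have hmain : x i = ∑ k, (if k ∈ S then M i k * x k else M i k * v k) := by
    rw [key]
    apply Finset.sum_congr rfl
    intro k _
    rw [hstep1 k]
    by_cases hk : k ∈ S
    · rw [if_pos hk, if_pos hk]; ring
    · rw [if_neg hk, if_neg hk]; ring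
  -- facts on M
  have hMii : M i i = 1 := by
    rw [hMgeom, Matrix.sum_apply]
    rw [Finset.sum_eq_single 0]
    · simp
    · intro n _ hn
      by_contra h
      have := AncExpAux.pow_entry_le hBlt n i i h
      omega
    · intro h
      exact absurd (Finset.mem_range.mpr i.pos) h
  have hMzero : ∀ k : Fin N, k ≠ i → ¬ Anc k i → M i k = 0 := by
    intro k hki hnk
    rw [hMgeom, Matrix.sum_apply]
    apply Finset.sum_eq_zero
    intro n _
    by_contra h
    rcases AncExpAux.pow_anc hBA n i k h with h' | h'
    · exact hki h'.symm
    · exact hnk (hAnc ▸ h')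
  have hAncii : ¬ Anc i i := by
    rw [hAnc]
    intro h
    exact absurd (AncExpAux.transGen_lt hA i i h) (lt_irrefl i)
  -- ctrlEffect identities
  have hcs : ∀ k : Fin N, ctrlEffect A S i k = M i k := fun k => rfl
  have hctrl : ∀ j : Fin N, j ∈ S → ctrlEffect A (S \ {j}) i j = M i j := by
    intro j hj
    set C : Matrix (Fin N) (Fin N) ℝ :=
      Matrix.of fun a b =>
        @ite ℝ (a ∈ S \ {j}) (Classical.propDecidable _) (0 : ℝ) (A a b) with hCdef
    have hClt : ∀ a b : Fin N, a ≤ b → C a b = 0 := by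
      intro a b hab
      simp only [hCdef, Matrix.of_apply]
      split
      · rfl
      · exact hA a b hab
    have hrow : ∀ a b : Fin N, a ≠ j → C a b = B a b := by
      intro a b haj
      simp only [hCdef, hBdef, Matrix.of_apply, Set.mem_diff, Set.mem_singleton_iff]
      by_cases ha : a ∈ S
      · rw [if_pos ⟨ha, haj⟩, if_pos ha]
      · rw [if_neg (fun h => ha h.1), if_neg ha]
    have hBj : ∀ b : Fin N, B j b = 0 := by
      intro b
      simp only [hBdef, Matrix.of_apply, if_pos hj]
    unfold ctrlEffect
    rw [← hCdef, AncExpAux.inv_geom hClt, hMgeom, Matrix.sum_apply, Matrix.sum_apply]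
    exact Finset.sum_congr rfl fun n _ => AncExpAux.pow_col hBlt hClt j hrow hBj n i
  -- assemble
  rw [hmain]
  have hvi : v i = ∑ k : Fin N, (if k = i then v i else 0) := by
    rw [Finset.sum_ite_eq' Finset.univ i (fun _ => v i), if_pos (Finset.mem_univ i)]
  rw [hvi, ← Finset.sum_add_distrib, ← Finset.sum_add_distrib]
  apply Finset.sum_congr rfl
  intro k _
  by_cases hk : k ∈ S
  · have hki : k ≠ i := fun h => hiS (h ▸ hk)
    rw [if_pos hk, if_pos hk, hctrl k hk,
      if_neg (fun h : Anc k i ∧ k ∉ S => h.2 hk), if_neg hki]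
    ring
  · rw [if_neg hk, if_neg hk]
    by_cases hki : k = i
    · subst hki
      rw [if_neg (fun h : Anc k k ∧ k ∉ S => hAncii h.1), if_pos rfl, hMii]
      ring
    · by_cases hanc : Anc k i
      · rw [if_pos ⟨hanc, hk⟩, hcs k, if_neg hki]
        ring
      · rw [if_neg (fun h : Anc k i ∧ k ∉ S => hanc h.1), if_neg hki,
          hMzero k hki hanc]
        ring
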